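/- Let 0 < ε < 1/2. Let M'₁, M'₂ be matroids on a common finite ground set N' with weight function w : N' → ℝ, w(e) > 0 for all e. Suppose there are pairwise disjoint weight intervals [l_1,r_1], …, [l_k,r_k] with 0 < l_j ≤ r_j and l_{j+1} > r_j/ε for all j, such that the sets N'_j = {e ∈ N' : l_j ≤ w(e) ≤ r_j} partition N'. For each j ∈ {1,…,k} let I'_j ⊆ N'_j be a set independent in both M'₁ and M'₂. Then there exists a set I ⊆ ⋃_{j=1}^k I'_j that is independent in both M'₁ and M'₂ and satisfies ∑_{e∈I} w(e) ≥ (1 − 4ε) · ∑_{j=1}^{k} ∑_{e∈I'_j} w(e). -/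

import Mathlib

open Finset

/-- A matroid on a finite ground set, given by its family of independent sets. -/
structure FinMatroid (α : Type*) [DecidableEq α] [Fintype α] where
  Indep : Finset α → Prop
  indep_empty : Indep ∅
  indep_subset : ∀ ⦃A B : Finset α⦄, A ⊆ B → Indep B → Indep A
  indep_exchange : ∀ ⦃A B : Finset α⦄, Indep A → Indep B → B.card < A.card →
    ∃ x ∈ A \ B, Indep (insert x B)

/-- The rank of a set `S` in a matroid: the size of a largest independent subset of `S`. -/
noncomputable def FinMatroid.rank {α : Type*} [DecidableEq α] [Fintype α]
    (M : FinMatroid α) (S : Finset α) : ℕ :=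
  sSup {n : ℕ | ∃ I ⊆ S, M.Indep I ∧ I.card = n}

/-- The rank of `S` with respect to an arbitrary independence predicate. -/
noncomputable def frank {β : Type*} (Ind : Finset β → Prop) (S : Finset β) : ℕ :=
  sSup {n : ℕ | ∃ I ⊆ S, Ind I ∧ I.card = n}

variable {α : Type*} [DecidableEq α] [Fintype α]

/-- The unfolded ground set `N = {(e,i) : e ∈ N', 1 ≤ i ≤ w e}`. -/
def unfoldGround (w : α → ℕ) : Finset (α × ℕ) :=
  Finset.univ.biUnion fun e => (Finset.Icc 1 (w e)).image fun i => (e, i)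

/-- The `i`-th layer projection `{e ∈ N' : (e,i) ∈ I}`. -/
def proj1 (I : Finset (α × ℕ)) (i : ℕ) : Finset α :=
  Finset.univ.filter fun e => (e, i) ∈ I

/-- The `i`-th reverse-layer projection `{e ∈ N' : (e, w e - i + 1) ∈ I}`. -/
def proj2 (w : α → ℕ) (I : Finset (α × ℕ)) (i : ℕ) : Finset α :=
  Finset.univ.filter fun e => i ≤ w e ∧ (e, w e - i + 1) ∈ I

/-- Independence in the unfolded matroid `M₁`. -/
def UnfoldIndep1 (M' : FinMatroid α) (w : α → ℕ) (W : ℕ) (I : Finset (α × ℕ)) : Prop :=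
  I ⊆ unfoldGround w ∧ ∀ i ∈ Finset.Icc 1 W, M'.Indep (proj1 I i)

/-- Independence in the unfolded matroid `M₂`. -/
def UnfoldIndep2 (M' : FinMatroid α) (w : α → ℕ) (W : ℕ) (I : Finset (α × ℕ)) : Prop :=
  I ⊆ unfoldGround w ∧ ∀ i ∈ Finset.Icc 1 W, M'.Indep (proj2 w I i)

/-- The unfolding `{(e,i) : e ∈ S', 1 ≤ i ≤ w e}` of a set `S' ⊆ N'`. -/
def unfoldSet (w : α → ℕ) (S' : Finset α) : Finset (α × ℕ) :=
  S'.biUnion fun e => (Finset.Icc 1 (w e)).image fun i => (e, i)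

lemma augment_one {M : FinMatroid α} {S J : Finset α}
    (hS : M.Indep S) (hJ : M.Indep J) :
    ∃ J' ⊆ J, M.Indep (S ∪ J') ∧ J.card ≤ J'.card + S.card := by
  classical
  set 𝒯 := (S ∪ J).powerset.filter (fun T => S ⊆ T ∧ M.Indep T) with h𝒯
  have hSmem : S ∈ 𝒯 :=
    Finset.mem_filter.mpr ⟨Finset.mem_powerset.mpr Finset.subset_union_left,
      Finset.Subset.refl S, hS⟩
  obtain ⟨T, hT, hTmax⟩ := 𝒯.exists_max_image Finset.card ⟨S, hSmem⟩
  simp only [h𝒯, Finset.mem_filter, Finset.mem_powerset] at hT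
  obtain ⟨hTsub, hST, hTind⟩ := hT
  have hJT : J.card ≤ T.card := by
    by_contra h
    push_neg at h
    obtain ⟨x, hx, hxind⟩ := M.indep_exchange hJ hTind h
    have hxT : x ∉ T := (Finset.mem_sdiff.mp hx).2
    have hmem : insert x T ∈ 𝒯 := by
      refine Finset.mem_filter.mpr ⟨Finset.mem_powerset.mpr ?_,
        hST.trans (Finset.subset_insert _ _), hxind⟩
      exact Finset.insert_subset
        (Finset.mem_union_right _ (Finset.mem_sdiff.mp hx).1) hTsub
    have := hTmax _ hmem
    rw [Finset.card_insert_of_notMem hxT] at this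
    omega
  refine ⟨T \ S, ?_, ?_, ?_⟩
  · intro x hx
    rcases Finset.mem_sdiff.mp hx with ⟨hxT, hxS⟩
    rcases Finset.mem_union.mp (hTsub hxT) with h | h
    · exact absurd h hxS
    · exact h
  · rwa [Finset.union_sdiff_of_subset hST]
  · have := Finset.card_sdiff_add_card_eq_card hST
    omega

lemma augment_two {M₁ M₂ : FinMatroid α} {S J : Finset α}
    (hS1 : M₁.Indep S) (hS2 : M₂.Indep S) (hJ1 : M₁.Indep J) (hJ2 : M₂.Indep J) :
    ∃ J' ⊆ J, M₁.Indep (S ∪ J') ∧ M₂.Indep (S ∪ J') ∧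
      J.card ≤ J'.card + 2 * S.card := by
  obtain ⟨J₁, hJ₁J, hInd1, hcard1⟩ := augment_one hS1 hJ1
  have hJ₁2 : M₂.Indep J₁ := M₂.indep_subset hJ₁J hJ2
  obtain ⟨J₂, hJ₂J₁, hInd2, hcard2⟩ := augment_one hS2 hJ₁2
  refine ⟨J₂, hJ₂J₁.trans hJ₁J, ?_, hInd2, by omega⟩
  exact M₁.indep_subset (Finset.union_subset_union_right hJ₂J₁) hInd1

/-- greedily merging common independent sets of the weight classes
of an `ε⁻¹`-spread instance loses at most a `(1 - 4ε)` factor of the total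
weight. -/
theorem spread_greedy_merge (ε : ℝ) (hε0 : 0 < ε) (hε : ε < 1/2)
    (M'₁ M'₂ : FinMatroid α) (w : α → ℝ) (hw : ∀ e : α, 0 < w e)
    (k : ℕ) (l r : ℕ → ℝ)
    (hlr : ∀ j < k, 0 < l j ∧ l j ≤ r j)
    (hgap : ∀ j, j + 1 < k → r j / ε < l (j + 1))
    (hpart : ∀ e : α, ∃ j < k, l j ≤ w e ∧ w e ≤ r j)
    (I' : ℕ → Finset α)
    (hI'sub : ∀ j < k, ∀ e ∈ I' j, l j ≤ w e ∧ w e ≤ r j)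
    (hI'ind : ∀ j < k, M'₁.Indep (I' j) ∧ M'₂.Indep (I' j)) :
    ∃ I ⊆ (Finset.range k).biUnion I', M'₁.Indep I ∧ M'₂.Indep I ∧
      (1 - 4 * ε) * ∑ j ∈ Finset.range k, ∑ e ∈ I' j, w e ≤ ∑ e ∈ I, w e := by
  classical
  -- r j < l j' whenever j < j' < k
  have hrl : ∀ j', j' < k → ∀ j < j', r j < l j' := by
    intro j'
    induction j' with
    | zero => intro _ j hj; omega
    | succ n ih =>
      intro hnk j hj
      have hln1 : 0 < l (n + 1) := (hlr (n + 1) hnk).1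
      have hrn : r n < ε * l (n + 1) := by
        have h := hgap n hnk
        rw [div_lt_iff₀ hε0] at h
        linarith
      have hrn' : r n < l (n + 1) := by nlinarith
      rcases Nat.lt_succ_iff_lt_or_eq.mp hj with h | h
      · have hnk' : n < k := by omega
        have h1 := ih hnk' j h
        have h2 := (hlr n hnk').2
        linarith
      · subst h; exact hrn'
  -- geometric-type bound on partial sums of r
  have hsumr : ∀ j', j' < k → ∑ j ∈ Finset.range j', r j ≤ 2 * ε * l j' := by
    intro j'
    induction j' with
    | zero =>
      intro h
      simp only [Finset.range_zero, Finset.sum_empty]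
      have := (hlr 0 h).1
      positivity
    | succ n ih =>
      intro hnk
      have hnk' : n < k := by omega
      have h1 := ih hnk'
      have h2 := (hlr n hnk').2
      have h3 := (hlr n hnk').1
      have hrn : r n < ε * l (n + 1) := by
        have h := hgap n hnk
        rw [div_lt_iff₀ hε0] at h
        linarith
      rw [Finset.sum_range_succ]
      nlinarith
  -- main downward induction
  have key : ∀ m, m ≤ k → ∃ S, S ⊆ (Finset.Ico (k - m) k).biUnion I' ∧
      M'₁.Indep S ∧ M'₂.Indep S ∧
      (S.card : ℝ) ≤ ∑ j ∈ Finset.Ico (k - m) k, ((I' j).card : ℝ) ∧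
      ∑ j ∈ Finset.Ico (k - m) k,
        ((∑ e ∈ I' j, w e) - 2 * r j * ∑ j' ∈ Finset.Ico (j + 1) k, ((I' j').card : ℝ))
        ≤ ∑ e ∈ S, w e := by
    intro m
    induction m with
    | zero =>
      intro _
      exact ⟨∅, by simp, M'₁.indep_empty, M'₂.indep_empty, by simp, by simp⟩
    | succ m ih =>
      intro hm1
      obtain ⟨S, hSsub, hS1, hS2, hScard, hSw⟩ := ih (by omega)
      set j0 := k - (m + 1) with hj0
      have hj0k : j0 < k := by omega
      have hkm : k - m = j0 + 1 := by omega
      obtain ⟨hJ1, hJ2⟩ := hI'ind j0 hj0k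
      obtain ⟨J', hJ'sub, hInd1, hInd2, hcard⟩ := augment_two hS1 hS2 hJ1 hJ2
      have hdisj : Disjoint S J' := by
        rw [Finset.disjoint_left]
        intro e heS heJ'
        obtain ⟨j', hj', hej'⟩ := Finset.mem_biUnion.mp (hSsub heS)
        rw [Finset.mem_Ico] at hj'
        have h1 := (hI'sub j' hj'.2 e hej').1
        have h2 := (hI'sub j0 hj0k e (hJ'sub heJ')).2
        have h3 := hrl j' hj'.2 j0 (by omega)
        linarith
      have hIco : Finset.Ico j0 k = insert j0 (Finset.Ico (k - m) k) := by
        rw [hkm]; exact (Finset.insert_Ico_add_one_left_eq_Ico hj0k).symm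
      have hj0notmem : j0 ∉ Finset.Ico (k - m) k := by simp [hkm]
      refine ⟨S ∪ J', ?_, hInd1, hInd2, ?_, ?_⟩
      · apply Finset.union_subset
        · refine hSsub.trans (Finset.biUnion_subset_biUnion_of_subset_left _ ?_)
          exact Finset.Ico_subset_Ico (by omega) le_rfl
        · intro e he
          exact Finset.mem_biUnion.mpr ⟨j0, Finset.mem_Ico.mpr ⟨le_rfl, hj0k⟩, hJ'sub he⟩
      · rw [hIco, Finset.sum_insert hj0notmem]
        have hc : (S ∪ J').card ≤ S.card + J'.card := Finset.card_union_le _ _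
        have hc2 : (J'.card : ℝ) ≤ ((I' j0).card : ℝ) := by
          exact_mod_cast Finset.card_le_card hJ'sub
        have hc3 : ((S ∪ J').card : ℝ) ≤ (S.card : ℝ) + (J'.card : ℝ) := by exact_mod_cast hc
        linarith
      · rw [hIco, Finset.sum_insert hj0notmem, Finset.sum_union hdisj]
        have hCeq : Finset.Ico (j0 + 1) k = Finset.Ico (k - m) k := by rw [hkm]
        -- weight loss bound at class j0
        have hr0pos : 0 < r j0 := lt_of_lt_of_le (hlr j0 hj0k).1 (hlr j0 hj0k).2
        have hsdiff : ∑ e ∈ I' j0 \ J', w e + ∑ e ∈ J', w e = ∑ e ∈ I' j0, w e :=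
          Finset.sum_sdiff hJ'sub
        have hsd_card : ((I' j0 \ J').card : ℝ) ≤ 2 * (S.card : ℝ) := by
          have h1 : (I' j0 \ J').card + J'.card = (I' j0).card :=
            Finset.card_sdiff_add_card_eq_card hJ'sub
          have : (I' j0 \ J').card ≤ 2 * S.card := by omega
          exact_mod_cast this
        have hsd_w : ∑ e ∈ I' j0 \ J', w e ≤ ((I' j0 \ J').card : ℝ) * r j0 := by
          have := Finset.sum_le_card_nsmul (I' j0 \ J') w (r j0)
            (fun e he => (hI'sub j0 hj0k e (Finset.mem_sdiff.mp he).1).2)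
          simpa [nsmul_eq_mul] using this
        have hC : (S.card : ℝ) ≤ ∑ j' ∈ Finset.Ico (j0 + 1) k, ((I' j').card : ℝ) := by
          rw [hCeq]; exact hScard
        have hloss : ∑ e ∈ I' j0, w e
            - 2 * r j0 * ∑ j' ∈ Finset.Ico (j0 + 1) k, ((I' j').card : ℝ)
            ≤ ∑ e ∈ J', w e := by
          nlinarith
        linarith
  obtain ⟨S, hsub, h1, h2, _, hwS⟩ := key k (le_refl k)
  rw [Nat.sub_self, ← Finset.range_eq_Ico] at hsub hwS
  refine ⟨S, hsub, h1, h2, ?_⟩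
  have hloss : ∑ j ∈ Finset.range k, 2 * r j * ∑ j' ∈ Finset.Ico (j + 1) k, ((I' j').card : ℝ)
      ≤ 4 * ε * ∑ j ∈ Finset.range k, ∑ e ∈ I' j, w e := by
    have hswap : ∑ j ∈ Finset.range k, ∑ j' ∈ Finset.Ico (j + 1) k,
          (2 * r j * ((I' j').card : ℝ))
        = ∑ j' ∈ Finset.range k, ∑ j ∈ Finset.range j',
          (2 * r j * ((I' j').card : ℝ)) := by
      rw [Finset.range_eq_Ico, Finset.sum_Ico_Ico_comm' 0 k]
      simp only [Finset.range_eq_Ico]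
    calc ∑ j ∈ Finset.range k, 2 * r j * ∑ j' ∈ Finset.Ico (j + 1) k, ((I' j').card : ℝ)
        = ∑ j ∈ Finset.range k, ∑ j' ∈ Finset.Ico (j + 1) k,
            (2 * r j * ((I' j').card : ℝ)) := by
          exact Finset.sum_congr rfl fun j _ => Finset.mul_sum _ _ _
      _ = ∑ j' ∈ Finset.range k, ∑ j ∈ Finset.range j',
            (2 * r j * ((I' j').card : ℝ)) := hswap
      _ ≤ ∑ j' ∈ Finset.range k, 4 * ε * ∑ e ∈ I' j', w e := by
          refine Finset.sum_le_sum fun j' hj' => ?_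
          have hj'k : j' < k := Finset.mem_range.mp hj'
          have hcpos : (0 : ℝ) ≤ ((I' j').card : ℝ) := Nat.cast_nonneg _
          have hsum : ∑ j ∈ Finset.range j', (2 * r j * ((I' j').card : ℝ))
              = (∑ j ∈ Finset.range j', r j) * (2 * ((I' j').card : ℝ)) := by
            rw [Finset.sum_mul]
            exact Finset.sum_congr rfl fun j _ => by ring
          rw [hsum]
          have h1 := hsumr j' hj'k
          have h2 : l j' * ((I' j').card : ℝ) ≤ ∑ e ∈ I' j', w e := by
            have := Finset.card_nsmul_le_sum (I' j') w (l j')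
              (fun e he => (hI'sub j' hj'k e he).1)
            simpa [nsmul_eq_mul, mul_comm] using this
          nlinarith
      _ = 4 * ε * ∑ j ∈ Finset.range k, ∑ e ∈ I' j, w e := (Finset.mul_sum _ _ _).symm
  have hsplit : ∑ j ∈ Finset.range k,
        ((∑ e ∈ I' j, w e) - 2 * r j * ∑ j' ∈ Finset.Ico (j + 1) k, ((I' j').card : ℝ))
      = (∑ j ∈ Finset.range k, ∑ e ∈ I' j, w e)
        - ∑ j ∈ Finset.range k, 2 * r j * ∑ j' ∈ Finset.Ico (j + 1) k, ((I' j').card : ℝ) :=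
    Finset.sum_sub_distrib _ _
  rw [hsplit] at hwS
  linarith
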